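/- Let $a^h$ and $a$ be as in the abstract VEM stability lemma (with $a^h(u,v) = a(\Pi u,\Pi v) + S((I-\Pi)u,(I-\Pi)v)$, $a$-orthogonal projection $\Pi$, and $\alpha_* a \le S \le \alpha^* a$ on the range of $I-\Pi$). Then $a^h$ is bounded: $|a^h(u,v)| \le \max\{1,\alpha^*\}\,a(u,u)^{1/2} a(v,v)^{1/2}$ for all $u,v \in V_h$. -/
import Mathlib

/-- Cauchy–Schwarz for a symmetric positive semidefinite bilinear form. -/
lemma cs_psd {V : Type*} [AddCommGroup V] [Module ℝ V]
    (b : LinearMap.BilinForm ℝ V) (bsymm : ∀ u v : V, b u v = b v u)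
    (bpsd : ∀ v : V, 0 ≤ b v v) (x y : V) :
    |b x y| ≤ Real.sqrt (b x x) * Real.sqrt (b y y) := by
  have hsq : (b x y) ^ 2 ≤ b x x * b y y := by
    have hpos : ∀ t : ℝ, 0 ≤ b y y * (t * t) + (2 * b x y) * t + b x x := by
      intro t
      have h := bpsd (x + t • y)
      simp only [map_add, map_smul, LinearMap.add_apply, LinearMap.smul_apply,
        smul_eq_mul] at h
      rw [bsymm y x] at h
      nlinarith [h]
    have hd := discrim_le_zero hpos
    unfold discrim at hd
    nlinarith [hd]
  have h1 : |b x y| = Real.sqrt ((b x y) ^ 2) := by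
    rw [Real.sqrt_sq_eq_abs]
  rw [h1, ← Real.sqrt_mul (bpsd x)]
  exact Real.sqrt_le_sqrt hsq

/-- Boundedness of the abstract VEM bilinear form: under the stability assumptions,
`|aʰ(u,v)| ≤ max{1,α⋆⋆} a(u,u)^{1/2} a(v,v)^{1/2}`. -/
theorem stmt7 {V : Type*} [AddCommGroup V] [Module ℝ V]
    (a S : LinearMap.BilinForm ℝ V) (P : V →ₗ[ℝ] V)
    (asymm : ∀ u v : V, a u v = a v u) (apsd : ∀ v : V, 0 ≤ a v v)
    (horth : ∀ u v : V, a (u - P u) (P v) = 0)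
    (Ssymm : ∀ u v : V, S u v = S v u) (Spsd : ∀ v : V, 0 ≤ S v v)
    (αss : ℝ)
    (hS : ∀ v : V, S (v - P v) (v - P v) ≤ αss * a (v - P v) (v - P v))
    (ah : V → V → ℝ)
    (hah : ∀ u v : V, ah u v = a (P u) (P v) + S (u - P u) (v - P v)) :
    ∀ u v : V, |ah u v| ≤ max 1 αss * (Real.sqrt (a u u) * Real.sqrt (a v v)) := by
  intro u v
  set M : ℝ := max 1 αss with hM
  have hM1 : (1 : ℝ) ≤ M := le_max_left _ _
  have hM0 : (0 : ℝ) ≤ M := by linarith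
  have hMα : αss ≤ M := le_max_right _ _
  -- Pythagoras
  have pyth : ∀ w : V, a w w = a (P w) (P w) + a (w - P w) (w - P w) := by
    intro w
    have h1 := horth w w
    have h2 : a (P w) (w - P w) = 0 := by rw [asymm]; exact h1
    have hw : P w + (w - P w) = w := by abel
    have key : a (P w + (w - P w)) (P w + (w - P w)) = a w w := by rw [hw]
    simp only [map_add, LinearMap.add_apply] at key
    rw [← key, h1, h2]; ring
  set p := Real.sqrt (a (P u) (P u)) with hpdef
  set q := Real.sqrt (a (P v) (P v)) with hqdef
  set r := Real.sqrt (a (u - P u) (u - P u)) with hrdef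
  set s := Real.sqrt (a (v - P v) (v - P v)) with hsdef
  have hp : 0 ≤ p := Real.sqrt_nonneg _
  have hq : 0 ≤ q := Real.sqrt_nonneg _
  have hr : 0 ≤ r := Real.sqrt_nonneg _
  have hs : 0 ≤ s := Real.sqrt_nonneg _
  have hp2 : p ^ 2 = a (P u) (P u) := Real.sq_sqrt (apsd _)
  have hq2 : q ^ 2 = a (P v) (P v) := Real.sq_sqrt (apsd _)
  have hr2 : r ^ 2 = a (u - P u) (u - P u) := Real.sq_sqrt (apsd _)
  have hs2 : s ^ 2 = a (v - P v) (v - P v) := Real.sq_sqrt (apsd _)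
  -- bound for the a-term
  have h1 : |a (P u) (P v)| ≤ p * q := cs_psd a asymm apsd _ _
  -- bound for the S-term
  have h2 : |S (u - P u) (v - P v)| ≤ M * (r * s) := by
    have hcs := cs_psd S Ssymm Spsd (u - P u) (v - P v)
    have hMsq : Real.sqrt M * Real.sqrt M = M := Real.mul_self_sqrt hM0
    have hu' : Real.sqrt (S (u - P u) (u - P u)) ≤ Real.sqrt M * r := by
      rw [← Real.sqrt_mul hM0]
      exact Real.sqrt_le_sqrt (by
        calc S (u - P u) (u - P u) ≤ αss * a (u - P u) (u - P u) := hS u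
          _ ≤ M * (a (u - P u) (u - P u)) := by nlinarith [apsd (u - P u)])
    have hv' : Real.sqrt (S (v - P v) (v - P v)) ≤ Real.sqrt M * s := by
      rw [← Real.sqrt_mul hM0]
      exact Real.sqrt_le_sqrt (by
        calc S (v - P v) (v - P v) ≤ αss * a (v - P v) (v - P v) := hS v
          _ ≤ M * (a (v - P v) (v - P v)) := by nlinarith [apsd (v - P v)])
    calc |S (u - P u) (v - P v)|
        ≤ Real.sqrt (S (u - P u) (u - P u)) * Real.sqrt (S (v - P v) (v - P v)) := hcs
      _ ≤ (Real.sqrt M * r) * (Real.sqrt M * s) := by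
          apply mul_le_mul hu' hv' (Real.sqrt_nonneg _)
          positivity
      _ = (Real.sqrt M * Real.sqrt M) * (r * s) := by ring
      _ = M * (r * s) := by rw [hMsq]
  -- two-dimensional Cauchy–Schwarz
  have h3 : p * q + r * s ≤ Real.sqrt (a u u) * Real.sqrt (a v v) := by
    have huu : Real.sqrt (a u u) = Real.sqrt (p ^ 2 + r ^ 2) := by
      rw [pyth u, hp2, hr2]
    have hvv : Real.sqrt (a v v) = Real.sqrt (q ^ 2 + s ^ 2) := by
      rw [pyth v, hq2, hs2]
    rw [huu, hvv]
    have key : (p * q + r * s) ^ 2 ≤ (p ^ 2 + r ^ 2) * (q ^ 2 + s ^ 2) := by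
      nlinarith [sq_nonneg (p * s - r * q)]
    calc p * q + r * s = Real.sqrt ((p * q + r * s) ^ 2) :=
          (Real.sqrt_sq (by positivity)).symm
      _ ≤ Real.sqrt ((p ^ 2 + r ^ 2) * (q ^ 2 + s ^ 2)) := Real.sqrt_le_sqrt key
      _ = Real.sqrt (p ^ 2 + r ^ 2) * Real.sqrt (q ^ 2 + s ^ 2) :=
          Real.sqrt_mul (by positivity) _
  have hstep : p * q ≤ M * (p * q) := le_mul_of_one_le_left (mul_nonneg hp hq) hM1
  calc |ah u v| = |a (P u) (P v) + S (u - P u) (v - P v)| := by rw [hah]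
    _ ≤ |a (P u) (P v)| + |S (u - P u) (v - P v)| := abs_add_le _ _
    _ ≤ p * q + M * (r * s) := add_le_add h1 h2
    _ ≤ M * (p * q + r * s) := by linarith [hstep]
    _ ≤ M * (Real.sqrt (a u u) * Real.sqrt (a v v)) :=
        mul_le_mul_of_nonneg_left h3 hM0
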